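/- Let π ∈ S, τ^π = τ_{F^π}, s ≥ 1, and let 𝐧 ∈ ℕ₀^d satisfy 𝐧 < 2^{2m_s+1}𝟏, 𝐧 ∉ B_{2m_s}, and 𝐧 ∉ {0,…,2^{m_s}−1}^d. Then (τ^π)̂_𝐧(Δ^{(m_s)}_𝐥) = 0 for every 𝐥 ∈ {0,…,2^{m_s}−1}^d. In particular this holds for τ = τ_F (identity permutations). -/

import Mathlib

open Filter Finset Topology MeasureTheory
open scoped Classical

noncomputable section

instance : TopologicalSpace (ZMod 2) := ⊥
instance : DiscreteTopology (ZMod 2) := ⟨rfl⟩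

/-- The dyadic (Cantor) group `𝔾`: sequences of elements of `ℤ/2ℤ`
with coordinatewise addition modulo 2, Tychonoff topology. -/
abbrev DyadicGroup : Type := ℕ → ZMod 2

instance : MeasurableSpace DyadicGroup := borel _
instance : BorelSpace DyadicGroup := ⟨rfl⟩

/-- `𝔾^d`. -/
abbrev GD (d : ℕ) : Type := Fin d → DyadicGroup

/-- One-dimensional Walsh function `W_n` in the Paley enumeration:
`W_n(g) = ∏_k (-1)^(g_k n_k)`. -/
def walsh (n : ℕ) (g : DyadicGroup) : ℝ :=
  ∏ k ∈ Finset.range n, if n.testBit k ∧ g k = 1 then (-1 : ℝ) else 1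

/-- `d`-dimensional Walsh function `W_𝐧(𝐠) = ∏ W_{n^l}(g^l)`. -/
def walshD {d : ℕ} (n : Fin d → ℕ) (g : GD d) : ℝ :=
  ∏ l, walsh (n l) (g l)

/-- The dyadic interval `Δ^{(k)}_m` of rank `k`. -/
def dyadicInterval (k m : ℕ) : Set DyadicGroup :=
  {g | ∀ t < k, g t = if m.testBit (k - 1 - t) then 1 else 0}

/-- The dyadic cube `Δ^{(k)}_𝐦 = Δ^{(k)}_{m^1} × ⋯ × Δ^{(k)}_{m^d}`. -/
def dyadicCube {d : ℕ} (k : ℕ) (m : Fin d → ℕ) : Set (GD d) :=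
  {g | ∀ l, g l ∈ dyadicInterval k (m l)}

/-- The canonical point of `Δ^{(k)}_m`. -/
def intervalPoint (k m : ℕ) : DyadicGroup :=
  fun t => if t < k ∧ m.testBit (k - 1 - t) then 1 else 0

/-- The canonical point of `Δ^{(k)}_𝐦`. -/
def cubePoint {d : ℕ} (k : ℕ) (m : Fin d → ℕ) : GD d :=
  fun l => intervalPoint k (m l)

/-- `W^{(k)}_{n,m}`: the (constant, for `n < 2^k`) value of `W_n` on `Δ^{(k)}_m`. -/
def walshVal (k n m : ℕ) : ℝ := walsh n (intervalPoint k m)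

/-- `W^{(k)}_{𝐧𝐦}`: the (constant, for `𝐧 < 2^k·𝟏`) value of `W_𝐧` on `Δ^{(k)}_𝐦`. -/
def walshValD {d : ℕ} (k : ℕ) (n m : Fin d → ℕ) : ℝ := walshD n (cubePoint k m)

/-- The box `{𝐧 : 𝐧 < 𝐍}` as a finset. -/
def boxLt {d : ℕ} (N : Fin d → ℕ) : Finset (Fin d → ℕ) :=
  Fintype.piFinset fun l => Finset.range (N l)

/-- The box `{0,…,2^k−1}^d` as a set. -/
def box (d k : ℕ) : Set (Fin d → ℕ) := {m | ∀ l, m l < 2 ^ k}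

/-- The rectangular partial sum `S_𝐍(𝐠)` of the Walsh series with coefficients `a`. -/
def walshPartialSum {d : ℕ} (a : (Fin d → ℕ) → ℂ) (N : Fin d → ℕ) (g : GD d) : ℂ :=
  ∑ n ∈ boxLt N, a n * (walshD n g : ℂ)

/-- Convergence over rectangles: `S_𝐍(𝐠) → S` as `min_j N^j → ∞`. -/
def ConvergesOverRectangles {d : ℕ} (a : (Fin d → ℕ) → ℂ) (g : GD d) (S : ℂ) : Prop :=
  Tendsto (fun N : Fin d → ℕ => walshPartialSum a N g) atTop (𝓝 S)

/-- Convergence over cubes: `S_{N𝟏}(𝐠) → S` as `N → ∞`. -/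
def ConvergesOverCubes {d : ℕ} (a : (Fin d → ℕ) → ℂ) (g : GD d) (S : ℂ) : Prop :=
  Tendsto (fun N : ℕ => walshPartialSum a (fun _ => N) g) atTop (𝓝 S)

/-- `λ`-convergence: `S_𝐍(𝐠) → S` as `min_j N^j → ∞` along `𝐍` with `max N^j/N^k ≤ λ`. -/
def LambdaConverges {d : ℕ} (lam : ℝ) (a : (Fin d → ℕ) → ℂ) (g : GD d) (S : ℂ) : Prop :=
  ∀ ε : ℝ, 0 < ε → ∃ K : ℕ, ∀ N : Fin d → ℕ, (∀ j, K ≤ N j) →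
    (∀ j k, (N j : ℝ) ≤ lam * N k) → ‖walshPartialSum a N g - S‖ < ε

/-- Auxiliary predicate for iterated summation of a multiple series with terms `f`;
the list gives the order of summation, *innermost index first*.  After summing the
series in the variables of the list, the remaining (partially summed) function is `g`. -/
def IterConvAux {d : ℕ} : List (Fin d) → ((Fin d → ℕ) → ℂ) → ((Fin d → ℕ) → ℂ) → Prop
  | [], f, g => f = g
  | j :: rest, f, g => ∃ h : (Fin d → ℕ) → ℂ,
      (∀ n, Tendsto (fun T : ℕ => ∑ t ∈ Finset.range T, f (Function.update n j t))
        atTop (𝓝 (h n))) ∧ IterConvAux rest h g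

/-- The multiple series with terms `f` converges iteratedly to `S`, the order of
summation being given by the list `l` (innermost index first): all successively
nested inner series converge and the full iterated sum equals `S`. -/
def IterConverges {d : ℕ} (l : List (Fin d)) (f : (Fin d → ℕ) → ℂ) (S : ℂ) : Prop :=
  ∃ g, IterConvAux l f g ∧ ∀ n, g n = S

/-- `A` is an M-set for the `d`-dimensional Walsh system under rectangular convergence. -/
def IsMSetRect {d : ℕ} (A : Set (GD d)) : Prop :=
  ∃ a : (Fin d → ℕ) → ℂ, (∃ n, a n ≠ 0) ∧ ∀ g ∉ A, ConvergesOverRectangles a g 0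

/-- `A` is an M-set for the `d`-dimensional Walsh system under convergence over cubes. -/
def IsMSetCubes {d : ℕ} (A : Set (GD d)) : Prop :=
  ∃ a : (Fin d → ℕ) → ℂ, (∃ n, a n ≠ 0) ∧ ∀ g ∉ A, ConvergesOverCubes a g 0

/-- `A` is an M-set under iterated convergence with summation order `l` (innermost first). -/
def IsMSetIter {d : ℕ} (A : Set (GD d)) (l : List (Fin d)) : Prop :=
  ∃ a : (Fin d → ℕ) → ℂ, (∃ n, a n ≠ 0) ∧
    ∀ g ∉ A, IterConverges l (fun n => a n * (walshD n g : ℂ)) 0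

/-- `A` is an M-set for the `d`-dimensional Walsh system under `λ`-convergence. -/
def IsMSetLambda {d : ℕ} (lam : ℝ) (A : Set (GD d)) : Prop :=
  ∃ a : (Fin d → ℕ) → ℂ, (∃ n, a n ≠ 0) ∧ ∀ g ∉ A, LambdaConverges lam a g 0

/-- A quasimeasure: a finitely additive function on dyadic cubes (indexed by rank
`k` and position `𝐦 < 2^k·𝟏`). -/
def IsQuasimeasure {d : ℕ} (τ : ℕ → (Fin d → ℕ) → ℂ) : Prop :=
  ∀ k m, (∀ l, m l < 2 ^ k) →
    τ k m = ∑ σ : Fin d → Fin 2, τ (k + 1) fun l => 2 * m l + (σ l : ℕ)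

/-- The quasimeasure generated by the Walsh series with coefficients `a`:
`τ(Δ^{(k)}_𝐦) = 2^{-kd} ∑_{𝐧<2^k𝟏} a_𝐧 W_𝐧(Δ^{(k)}_𝐦)`. -/
def genQM {d : ℕ} (a : (Fin d → ℕ) → ℂ) (k : ℕ) (m : Fin d → ℕ) : ℂ :=
  ((2 : ℂ) ^ (k * d))⁻¹ * ∑ n ∈ boxLt (fun _ : Fin d => 2 ^ k), a n * (walshValD k n m : ℂ)

/-- The Fourier–Walsh coefficient `τ̂_𝐧` of a quasimeasure `τ`, computed at resolution `k`
(the value does not depend on `k` as long as `𝐧 < 2^k𝟏`). -/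
def fourierCoeffAt {d : ℕ} (τ : ℕ → (Fin d → ℕ) → ℂ) (n : Fin d → ℕ) (k : ℕ) : ℂ :=
  ∑ m ∈ boxLt (fun _ : Fin d => 2 ^ k), (walshValD k n m : ℂ) * τ k m

/-- The local Fourier–Walsh coefficient `τ̂_𝐧(Δ^{(r)}_{𝐦Δ})`, computed at resolution `k ≥ r`. -/
def localCoeffAt {d : ℕ} (τ : ℕ → (Fin d → ℕ) → ℂ) (n : Fin d → ℕ)
    (r : ℕ) (mΔ : Fin d → ℕ) (k : ℕ) : ℂ :=
  ∑ m ∈ (boxLt (fun _ : Fin d => 2 ^ k)).filter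
      (fun m => dyadicCube k m ⊆ dyadicCube r mΔ),
    (walshValD k n m : ℂ) * τ k m

/-- The support of a quasimeasure: the complement of the union of all dyadic cubes `Δ₀`
such that `τ(Δ) = 0` for every dyadic cube `Δ ⊆ Δ₀`. -/
def qmSupport {d : ℕ} (τ : ℕ → (Fin d → ℕ) → ℂ) : Set (GD d) :=
  (⋃ k, ⋃ m ∈ box d k,
    ⋃ (_ : ∀ k' m', (∀ l, m' l < 2 ^ k') →
        dyadicCube k' m' ⊆ dyadicCube k m → τ k' m' = 0),
    dyadicCube k m)ᶜ

/-- The restriction `τ|_{Δ̃}` of a quasimeasure to the dyadic cube `Δ̃ = Δ^{(r)}_{𝐦Δ}`: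
`τ|_{Δ̃}(Δ) = τ(Δ̃ ∩ Δ)` (two dyadic cubes are nested or disjoint). -/
def restrictQM {d : ℕ} (τ : ℕ → (Fin d → ℕ) → ℂ) (r : ℕ) (mΔ : Fin d → ℕ) :
    ℕ → (Fin d → ℕ) → ℂ := fun k m =>
  if dyadicCube k m ⊆ dyadicCube (d := d) r mΔ then τ k m
  else if dyadicCube (d := d) r mΔ ⊆ dyadicCube k m then τ r mΔ
  else 0

/-- `τ` is the canonical quasimeasure `τ_E` associated with a (nonempty closed) set `E`:
`τ(𝔾^d) = 1`; `τ(Δ) = 0` iff `Δ ∩ E = ∅`; and the mass of a cube meeting `E` is divided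
equally among its `2^d` immediate subcubes that meet `E`. -/
def IsTauOf {d : ℕ} (E : Set (GD d)) (τ : ℕ → (Fin d → ℕ) → ℂ) : Prop :=
  IsQuasimeasure τ ∧
  τ 0 (fun _ => 0) = 1 ∧
  (∀ k m, (∀ l, m l < 2 ^ k) → (τ k m = 0 ↔ dyadicCube k m ∩ E = ∅)) ∧
  (∀ k m, (∀ l, m l < 2 ^ k) → (dyadicCube k m ∩ E).Nonempty →
    ∀ σ : Fin d → Fin 2,
      τ (k + 1) (fun l => 2 * m l + (σ l : ℕ)) =
        if (dyadicCube (k + 1) (fun l => 2 * m l + (σ l : ℕ)) ∩ E).Nonempty then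
          τ k m / ((Finset.univ.filter fun σ' : Fin d → Fin 2 =>
              (dyadicCube (k + 1) (fun l => 2 * m l + (σ' l : ℕ)) ∩ E).Nonempty).card : ℂ)
        else 0)

/-- The sequence `m_s`: `m_1 = 0`, `m_{s+1} = 2(2m_s+1)` (value at `0` is junk). -/
def mSeq : ℕ → ℕ
  | 0 => 0
  | s + 1 => if s = 0 then 0 else 2 * (2 * mSeq s + 1)

/-- The layer `F_s^π`. -/
def Fspi {d : ℕ} (π : ℕ → (Fin d → ℕ) → Fin d → ℕ) (s : ℕ) : Set (GD d) :=
  ⋃ m ∈ box d (mSeq s), ⋃ m' ∈ box d (mSeq s),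
    {g | g ∈ dyadicCube (2 * mSeq s) (fun l => 2 ^ mSeq s * m l + m' l) ∧
      walshD (fun _ => 2 ^ (2 * mSeq s)) g = walshValD (mSeq s) (π s m) m'}

/-- `F̃_s^π = F_1^π ∩ ⋯ ∩ F_s^π` (so `F̃_0^π = 𝔾^d`). -/
def Ftil {d : ℕ} (π : ℕ → (Fin d → ℕ) → Fin d → ℕ) (s : ℕ) : Set (GD d) :=
  ⋂ k ∈ Finset.Icc 1 s, Fspi π k

/-- `F^π = ⋂_{s≥1} F_s^π`. -/
def Fpi {d : ℕ} (π : ℕ → (Fin d → ℕ) → Fin d → ℕ) : Set (GD d) :=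
  ⋂ s ∈ Set.Ici 1, Fspi π s

/-- The identity element of `S` (yielding `F_s`, `F̃_s` and `F` themselves). -/
def idPerm (d : ℕ) : ℕ → (Fin d → ℕ) → Fin d → ℕ := fun _ m => m

/-- `S`: sequences `π = (π_s)` of permutations of the boxes `{0,…,2^{m_s}−1}^d`. -/
structure PermSeq (d : ℕ) where
  p : ℕ → Equiv.Perm (Fin d → ℕ)
  maps : ∀ s, Set.MapsTo (p s) (box d (mSeq s)) (box d (mSeq s))

/-- The underlying sequence of functions of an element of `S`. -/
def PermSeq.f {d : ℕ} (π : PermSeq d) : ℕ → (Fin d → ℕ) → Fin d → ℕ := fun s => ⇑(π.p s)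

/-- `π ∈ S'`: every `π_s` acts coordinatewise, `π_s(𝐦) = (π_s^1(m^1),…,π_s^d(m^d))`. -/
def PermSeq.Coordinatewise {d : ℕ} (π : PermSeq d) : Prop :=
  ∀ s, ∃ e : Fin d → ℕ → ℕ, ∀ m : Fin d → ℕ, π.p s m = fun l => e l (m l)

/-- The Dirichlet kernel `D_N = ∑_{n<N} W_n` of the one-dimensional Walsh system. -/
def dirichlet (N : ℕ) (g : DyadicGroup) : ℝ :=
  ∑ n ∈ Finset.range N, walsh n g
-- ===== auxiliary development =====

section Aux

lemma zmod2_cases (x : ZMod 2) : x = 0 ∨ x = 1 := by revert x; decide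

lemma zmod2_add_self (x : ZMod 2) : x + x = 0 := by revert x; decide

/-- sign character on `ZMod 2`. -/
def chi (x : ZMod 2) : ℝ := if x = 0 then 1 else -1

lemma chi_add (x y : ZMod 2) : chi (x + y) = chi x * chi y := by
  have h11 : ((1 : ZMod 2) + 1) = 0 := by decide
  have h10 : ((1 : ZMod 2) ≠ 0) := by decide
  rcases zmod2_cases x with rfl | rfl <;> rcases zmod2_cases y with rfl | rfl <;>
    simp [chi, h11, h10]

lemma chi_inj {x y : ZMod 2} (h : chi x = chi y) : x = y := by
  rcases zmod2_cases x with rfl | rfl <;> rcases zmod2_cases y with rfl | rfl <;>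
    first | rfl | (norm_num [chi] at h)

lemma prod_chi {d : ℕ} (f : Fin d → ZMod 2) :
    ∏ l, chi (f l) = chi (∑ l, f l) := by
  classical
  induction (Finset.univ : Finset (Fin d)) using Finset.cons_induction with
  | empty => simp [chi]
  | cons a s ha ih => rw [Finset.prod_cons, Finset.sum_cons, ih, chi_add]

-- ===== walsh lemmas =====

lemma walsh_congr {n : ℕ} {g g' : DyadicGroup}
    (h : ∀ t, n.testBit t = true → g t = g' t) : walsh n g = walsh n g' := by
  refine Finset.prod_congr rfl fun t _ => ?_
  by_cases hb : n.testBit t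
  · rw [h t hb]
  · simp [hb]

lemma walsh_flip (n t₀ : ℕ) (g : DyadicGroup) :
    walsh n (fun t => if t = t₀ then g t + 1 else g t)
      = (if n.testBit t₀ then (-1 : ℝ) else 1) * walsh n g := by
  by_cases hb : n.testBit t₀
  · have ht₀ : t₀ ∈ Finset.range n := by
      refine Finset.mem_range.2 (lt_of_lt_of_le ((Nat.lt_two_pow_self (n := t₀))) ?_)
      exact Nat.ge_two_pow_of_testBit hb
    rw [if_pos hb, walsh, walsh, ← Finset.mul_prod_erase _ _ ht₀,
      ← Finset.mul_prod_erase _ _ ht₀, ← mul_assoc]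
    congr 1
    · simp only [if_pos rfl]
      rcases zmod2_cases (g t₀) with h0 | h1
      · rw [h0]
        have e1 : ((0 : ZMod 2) + 1) = 1 := by decide
        have e2 : ((0 : ZMod 2) ≠ 1) := by decide
        simp [hb, e1, e2]
      · rw [h1]
        have e1 : ((1 : ZMod 2) + 1) = 0 := by decide
        have e2 : ((0 : ZMod 2) ≠ 1) := by decide
        simp [hb, e1, e2]
    · refine Finset.prod_congr rfl fun t ht => ?_
      rw [if_neg (Finset.ne_of_mem_erase ht)]
  · rw [if_neg hb, one_mul]
    refine walsh_congr fun t htb => ?_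
    have : t ≠ t₀ := fun h => hb (h ▸ htb)
    rw [if_neg this]

lemma walsh_two_pow (j : ℕ) (g : DyadicGroup) : walsh (2 ^ j) g = chi (g j) := by
  rw [walsh]
  rw [Finset.prod_eq_single j]
  · rcases zmod2_cases (g j) with h0 | h1
    · rw [h0]; norm_num [chi, Nat.testBit_two_pow]
    · rw [h1]; norm_num [chi, Nat.testBit_two_pow]
  · intro t _ ht
    rw [if_neg]
    rintro ⟨hb, -⟩
    rw [Nat.testBit_two_pow] at hb
    have hjt : j = t := by simpa using hb
    exact ht hjt.symm
  · intro h
    exact absurd (Finset.mem_range.2 (Nat.lt_two_pow_self (n := j))) h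

lemma walsh_pm (n : ℕ) (g : DyadicGroup) : walsh n g = 1 ∨ walsh n g = -1 := by
  rw [walsh]
  refine Finset.prod_induction _ (fun x => x = 1 ∨ x = -1) ?_ (Or.inl rfl) ?_
  · rintro a b (rfl | rfl) (rfl | rfl) <;> norm_num
  · intro t _
    by_cases h : n.testBit t ∧ g t = 1 <;> simp [h]

lemma walshD_pm {d : ℕ} (n : Fin d → ℕ) (g : GD d) :
    walshD n g = 1 ∨ walshD n g = -1 := by
  rw [walshD]
  refine Finset.prod_induction _ (fun x => x = 1 ∨ x = -1) ?_ (Or.inl rfl) ?_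
  · rintro a b (rfl | rfl) (rfl | rfl) <;> norm_num
  · intro l _; exact walsh_pm _ _

lemma walshD_congr {d : ℕ} {n : Fin d → ℕ} {g g' : GD d}
    (h : ∀ l t, (n l).testBit t = true → g l t = g' l t) : walshD n g = walshD n g' :=
  Finset.prod_congr rfl fun l _ => walsh_congr (h l)

lemma walshD_two_pow {d : ℕ} (j : ℕ) (g : GD d) :
    walshD (fun _ => 2 ^ j) g = chi (∑ l, g l j) := by
  rw [walshD, ← prod_chi]
  exact Finset.prod_congr rfl fun l _ => walsh_two_pow j (g l)

-- ===== posNum =====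

/-- The index of the rank-`k` dyadic interval containing `g`. -/
def posNum : ℕ → (ℕ → ZMod 2) → ℕ
  | 0, _ => 0
  | k + 1, g => 2 * posNum k g + (if g k = 1 then 1 else 0)

lemma posNum_lt (k : ℕ) (g : ℕ → ZMod 2) : posNum k g < 2 ^ k := by
  induction k with
  | zero => simp [posNum]
  | succ k ih =>
    have : (if g k = 1 then 1 else 0) ≤ 1 := by split <;> omega
    rw [posNum, pow_succ]; omega

lemma posNum_congr {k : ℕ} {g g' : ℕ → ZMod 2} (h : ∀ t, t < k → g t = g' t) :
    posNum k g = posNum k g' := by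
  induction k with
  | zero => rfl
  | succ k ih =>
    rw [posNum, posNum, ih (fun t ht => h t (by omega)), h k (by omega)]

lemma testBit_posNum (k : ℕ) (g : ℕ → ZMod 2) :
    ∀ t, t < k → (posNum k g).testBit (k - 1 - t) = decide (g t = 1) := by
  induction k with
  | zero => omega
  | succ k ih =>
    intro t ht
    by_cases htk : t < k
    · have h0 : k + 1 - 1 - t = (k - 1 - t) + 1 := by omega
      rw [h0, Nat.testBit_add_one, posNum]
      have : (2 * posNum k g + (if g k = 1 then 1 else 0)) / 2 = posNum k g := by
        split <;> omega
      rw [this, ih t htk]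
    · have hteq : t = k := by omega
      subst hteq
      have h0 : t + 1 - 1 - t = 0 := by omega
      rw [h0, Nat.testBit_zero, posNum]
      by_cases hh : g t = 1
      · simp only [hh, if_true]
        have : (2 * posNum t g + 1) % 2 = 1 := by omega
        simp [this, hh]
      · simp only [hh, if_false]
        have : (2 * posNum t g + 0) % 2 = 0 := by omega
        simp [this, hh]

lemma posNum_eq {k m : ℕ} (hm : m < 2 ^ k) {g : ℕ → ZMod 2}
    (hg : ∀ t, t < k → g t = if m.testBit (k - 1 - t) then 1 else 0) :
    posNum k g = m := by
  refine Nat.eq_of_testBit_eq fun i => ?_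
  by_cases hik : i < k
  · have hti : k - 1 - (k - 1 - i) = i := by omega
    have h2 : k - 1 - i < k := by omega
    rw [show i = k - 1 - (k - 1 - i) from hti.symm] at hik ⊢
    rw [testBit_posNum k g _ h2, hg _ h2]
    by_cases hb : m.testBit (k - 1 - (k - 1 - i))
    · simp [hb]
    · simp only [hb, if_false]
      simp [show ¬((0 : ZMod 2) = 1) from by decide, hb]
  · have h1 : (posNum k g).testBit i = false :=
      Nat.testBit_lt_two_pow (lt_of_lt_of_le (posNum_lt k g)
        (Nat.pow_le_pow_right (by norm_num) (by omega)))
    have h2 : m.testBit i = false :=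
      Nat.testBit_lt_two_pow (lt_of_lt_of_le hm
        (Nat.pow_le_pow_right (by norm_num) (by omega)))
    rw [h1, h2]

lemma intervalPoint_posNum {k t : ℕ} (h : ℕ → ZMod 2) (ht : t < k) :
    intervalPoint k (posNum k h) t = h t := by
  rw [intervalPoint, testBit_posNum k h t ht]
  rcases zmod2_cases (h t) with h0 | h1
  · simp [h0, ht, show ¬((0 : ZMod 2) = 1) from by decide]
  · simp [h1, ht]

lemma posNum_intervalPoint {k m : ℕ} (hm : m < 2 ^ k) :
    posNum k (intervalPoint k m) = m := by
  refine posNum_eq hm fun t ht => ?_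
  simp [intervalPoint, ht]

end Aux
section Cubes

variable {d : ℕ}

lemma intervalPoint_mem (k m : ℕ) : intervalPoint k m ∈ dyadicInterval k m := by
  intro t ht
  simp [intervalPoint, ht]

lemma mem_interval_iff_agree {k m : ℕ} {g : DyadicGroup} :
    g ∈ dyadicInterval k m ↔ ∀ t, t < k → g t = intervalPoint k m t := by
  constructor
  · intro h t ht
    rw [h t ht]
    simp [intervalPoint, ht]
  · intro h t ht
    rw [h t ht]
    simp [intervalPoint, ht]

lemma cubePoint_mem (k : ℕ) (m : Fin d → ℕ) : cubePoint k m ∈ dyadicCube k m :=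
  fun l => intervalPoint_mem k (m l)

lemma mem_cube_iff_agree {k : ℕ} {m : Fin d → ℕ} {g : GD d} :
    g ∈ dyadicCube k m ↔ ∀ l, ∀ t, t < k → g l t = cubePoint k m l t := by
  constructor
  · intro h l t ht
    exact mem_interval_iff_agree.1 (h l) t ht
  · intro h l
    exact mem_interval_iff_agree.2 (h l)

lemma mem_interval_posNum (k : ℕ) (g : DyadicGroup) :
    g ∈ dyadicInterval k (posNum k g) := by
  intro t ht
  rw [testBit_posNum k g t ht]
  rcases zmod2_cases (g t) with h0 | h1
  · simp [h0, show ¬((0 : ZMod 2) = 1) from by decide]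
  · simp [h1]

lemma posNum_eq_of_mem {k m : ℕ} (hm : m < 2 ^ k) {g : DyadicGroup}
    (hg : g ∈ dyadicInterval k m) : posNum k g = m :=
  posNum_eq hm hg

lemma cube_subset_iff {k r : ℕ} (hrk : r ≤ k) {m q : Fin d → ℕ} :
    dyadicCube k m ⊆ dyadicCube r q ↔ cubePoint k m ∈ dyadicCube r q := by
  constructor
  · intro h
    exact h (cubePoint_mem k m)
  · intro h g hg l t ht
    have h1 : g l t = cubePoint k m l t := mem_cube_iff_agree.1 hg l t (lt_of_lt_of_le ht hrk)
    rw [h1]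
    exact h l t ht

lemma child_subset {k : ℕ} {m : Fin d → ℕ} :
    dyadicCube (k + 1) m ⊆ dyadicCube k (fun l => m l / 2) := by
  intro g hg l t ht
  have h1 := hg l t (by omega)
  rw [h1]
  have h2 : (m l / 2).testBit (k - 1 - t) = (m l).testBit (k - 1 - t + 1) := by
    rw [← Nat.testBit_add_one]
  have h3 : k - 1 - t + 1 = k + 1 - 1 - t := by omega
  rw [h2, h3]

lemma cubePoint_parent {k : ℕ} {m : Fin d → ℕ} {l : Fin d} {t : ℕ} (ht : t < k) :
    cubePoint (k + 1) m l t = cubePoint k (fun l => m l / 2) l t := by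
  have h2 : (m l / 2).testBit (k - 1 - t) = (m l).testBit (k + 1 - 1 - t) := by
    rw [← Nat.testBit_add_one]
    congr 1
    omega
  simp [cubePoint, intervalPoint, ht, Nat.lt_succ_of_lt ht, h2]

end Cubes

section MSeq

lemma mSeq_one : mSeq 1 = 0 := by simp [mSeq]

lemma mSeq_succ_eq {s : ℕ} (hs : 1 ≤ s) : mSeq (s + 1) = 2 * (2 * mSeq s + 1) := by
  rw [mSeq]
  rw [if_neg (by omega)]

lemma mSeq_strictMonoOn {a b : ℕ} (ha : 1 ≤ a) (hab : a < b) : mSeq a < mSeq b := by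
  induction b with
  | zero => omega
  | succ b ih =>
    rcases Nat.lt_succ_iff_lt_or_eq.1 hab with h | h
    · have hb : 1 ≤ b := by omega
      exact lt_of_lt_of_le (ih h) (by rw [mSeq_succ_eq hb]; omega)
    · subst h
      rw [mSeq_succ_eq ha]
      omega

lemma mSeq_monoOn {a b : ℕ} (ha : 1 ≤ a) (hab : a ≤ b) : mSeq a ≤ mSeq b := by
  rcases eq_or_lt_of_le hab with rfl | h
  · exact le_refl _
  · exact le_of_lt (mSeq_strictMonoOn ha h)

lemma mSeq_ge_self {a : ℕ} (ha : 2 ≤ a) : a ≤ mSeq a := by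
  induction a with
  | zero => omega
  | succ a ih =>
    rcases Nat.lt_or_ge a 2 with h | h
    · have : a = 1 := by omega
      subst this
      rw [mSeq_succ_eq (by omega), mSeq_one]
    · have h1 := ih (by omega)
      rw [mSeq_succ_eq (by omega)]
      omega

lemma two_mSeq_lt_of_lt {s' s : ℕ} (hs' : 1 ≤ s') (h : s' < s) :
    2 * mSeq s' + 1 ≤ mSeq s := by
  have h1 : mSeq (s' + 1) ≤ mSeq s := mSeq_monoOn (by omega) (by omega)
  rw [mSeq_succ_eq hs'] at h1
  omega

end MSeq
section FChar

variable {d : ℕ}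

/-- high digits of `g` at scale `μ`. -/
def Adig (μ : ℕ) (g : GD d) : Fin d → ℕ := fun l => posNum μ (g l)

/-- next `μ` digits of `g`. -/
def Bdig (μ : ℕ) (g : GD d) : Fin d → ℕ := fun l => posNum μ (fun t => g l (μ + t))

/-- the `ZMod 2`-encoded target value of the `F_s` constraint. -/
def Tg (P : ℕ → (Fin d → ℕ) → Fin d → ℕ) (s : ℕ) (g : GD d) : ZMod 2 :=
  if walshValD (mSeq s) (P s (Adig (mSeq s) g)) (Bdig (mSeq s) g) = 1 then 0 else 1

lemma Tg_congr {P : ℕ → (Fin d → ℕ) → Fin d → ℕ} {s : ℕ} {g g' : GD d}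
    (h : ∀ l t, t < 2 * mSeq s → g l t = g' l t) : Tg P s g = Tg P s g' := by
  have hA : Adig (mSeq s) g = Adig (mSeq s) g' := by
    funext l
    exact posNum_congr fun t ht => h l t (by omega)
  have hB : Bdig (mSeq s) g = Bdig (mSeq s) g' := by
    funext l
    exact posNum_congr fun t ht => h l (mSeq s + t) (by omega)
  rw [Tg, Tg, hA, hB]

lemma chi_Tg (P : ℕ → (Fin d → ℕ) → Fin d → ℕ) (s : ℕ) (g : GD d) :
    chi (Tg P s g) = walshValD (mSeq s) (P s (Adig (mSeq s) g)) (Bdig (mSeq s) g) := by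
  have hpm : walshValD (mSeq s) (P s (Adig (mSeq s) g)) (Bdig (mSeq s) g) = 1 ∨
      walshValD (mSeq s) (P s (Adig (mSeq s) g)) (Bdig (mSeq s) g) = -1 := walshD_pm _ _
  rw [Tg]
  by_cases hc : walshValD (mSeq s) (P s (Adig (mSeq s) g)) (Bdig (mSeq s) g) = 1
  · rw [if_pos hc, hc]
    simp [chi]
  · rw [if_neg hc]
    rcases hpm with h | h
    · exact absurd h hc
    · rw [h]
      simp [chi, show ((1 : ZMod 2) ≠ 0) from by decide]

lemma mem_cube_digits_iff {μ : ℕ} {a b : Fin d → ℕ} (ha : ∀ l, a l < 2 ^ μ)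
    (hb : ∀ l, b l < 2 ^ μ) (g : GD d) :
    g ∈ dyadicCube (2 * μ) (fun l => 2 ^ μ * a l + b l) ↔
      a = Adig μ g ∧ b = Bdig μ g := by
  constructor
  · intro h
    constructor
    · funext l
      refine (posNum_eq_of_mem (ha l) ?_).symm
      intro t ht
      have h1 := h l t (by omega)
      rw [h1, Nat.testBit_two_pow_mul_add _ (hb l),
        if_neg (show ¬(2 * μ - 1 - t < μ) by omega),
        show 2 * μ - 1 - t - μ = μ - 1 - t by omega]
    · funext l
      refine (posNum_eq_of_mem (hb l) ?_).symm
      intro t ht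
      have h1 := h l (μ + t) (by omega)
      show g l (μ + t) = _
      rw [h1, Nat.testBit_two_pow_mul_add _ (hb l),
        if_pos (show 2 * μ - 1 - (μ + t) < μ by omega),
        show 2 * μ - 1 - (μ + t) = μ - 1 - t by omega]
  · rintro ⟨rfl, rfl⟩
    intro l t ht
    rw [Nat.testBit_two_pow_mul_add _ (hb l)]
    by_cases htμ : t < μ
    · rw [if_neg (show ¬(2 * μ - 1 - t < μ) by omega),
        show 2 * μ - 1 - t - μ = μ - 1 - t by omega]
      exact mem_interval_posNum μ (g l) t htμ
    · have ht' : t - μ < μ := by omega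
      rw [if_pos (show 2 * μ - 1 - t < μ by omega),
        show 2 * μ - 1 - t = μ - 1 - (t - μ) by omega]
      have h4 := mem_interval_posNum μ (fun t => g l (μ + t)) (t - μ) ht'
      simp only at h4
      rw [show μ + (t - μ) = t from by omega] at h4
      exact h4

lemma mem_Fspi_iff (P : ℕ → (Fin d → ℕ) → Fin d → ℕ) (s : ℕ) (g : GD d) :
    g ∈ Fspi P s ↔ (∑ l, g l (2 * mSeq s)) = Tg P s g := by
  set μ := mSeq s with hμ
  constructor
  · intro h
    simp only [Fspi, Set.mem_iUnion, Set.mem_setOf_eq] at h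
    obtain ⟨a, ha, b, hb, hcube, heq⟩ := h
    obtain ⟨rfl, rfl⟩ := (mem_cube_digits_iff ha hb g).1 hcube
    rw [walshD_two_pow] at heq
    rw [← chi_Tg P s g] at heq
    exact chi_inj heq
  · intro h
    simp only [Fspi, Set.mem_iUnion, Set.mem_setOf_eq]
    refine ⟨Adig μ g, fun l => posNum_lt _ _, Bdig μ g, fun l => posNum_lt _ _, ?_, ?_⟩
    · exact (mem_cube_digits_iff (fun l => posNum_lt _ _) (fun l => posNum_lt _ _) g).2 ⟨rfl, rfl⟩
    · rw [walshD_two_pow, ← chi_Tg P s g, h]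

lemma mem_Fpi_iff (P : ℕ → (Fin d → ℕ) → Fin d → ℕ) (g : GD d) :
    g ∈ Fpi P ↔ ∀ s, 1 ≤ s → (∑ l, g l (2 * mSeq s)) = Tg P s g := by
  simp only [Fpi, Set.mem_iInter, Set.mem_Ici]
  constructor
  · intro h s hs
    exact (mem_Fspi_iff P s g).1 (h s hs)
  · intro h s hs
    exact (mem_Fspi_iff P s g).2 (h s hs)

end FChar
section Phi

variable {d : ℕ} (P : ℕ → (Fin d → ℕ) → Fin d → ℕ) (e : Fin d → ℕ → ZMod 2)
  (lc : Fin d) (s₁ : ℕ)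

/-- sum of the base flips at constraint level `s'`. -/
def Esum (s' : ℕ) : ZMod 2 := ∑ l, e l (2 * mSeq s')

/-- successive corrected maps. -/
def psi (g : GD d) : ℕ → GD d
  | 0 => fun l t => g l t + e l t
  | j + 1 => fun l t => psi g j l t +
      (if l = lc ∧ t = 2 * mSeq (s₁ + j) then
        Tg P (s₁ + j) (psi g j) + Tg P (s₁ + j) g + Esum e (s₁ + j) else 0)

/-- the bit-flip map. -/
def phi (g : GD d) : GD d := fun l t => psi P e lc s₁ g (t + 1) l t

variable {P e lc s₁}

lemma psi_step_ne {g : GD d} {l : Fin d} {t j : ℕ}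
    (h : ¬(l = lc ∧ t = 2 * mSeq (s₁ + j))) :
    psi P e lc s₁ g (j + 1) l t = psi P e lc s₁ g j l t := by
  show psi P e lc s₁ g j l t + _ = _
  rw [if_neg h, add_zero]

lemma psi_stable {g : GD d} {j : ℕ} (hs₁ : 1 ≤ s₁) :
    ∀ i, j ≤ i → ∀ l t, t < 2 * mSeq (s₁ + j) → psi P e lc s₁ g i l t = psi P e lc s₁ g j l t := by
  intro i
  induction i with
  | zero => intro hi l t ht; rw [Nat.le_zero.1 hi]
  | succ i ih =>
    intro hi l t ht
    rcases Nat.lt_succ_iff_lt_or_eq.1 (Nat.lt_succ_of_le hi) with h | h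
    · have h1 : ¬(l = lc ∧ t = 2 * mSeq (s₁ + i)) := by
        rintro ⟨-, rfl⟩
        have : mSeq (s₁ + j) ≤ mSeq (s₁ + i) := mSeq_monoOn (by omega) (by omega)
        omega
      rw [psi_step_ne h1]
      exact ih (by omega) l t ht
    · rw [h]
  
lemma psi_untouched {g : GD d} {l : Fin d} {t : ℕ} :
    ∀ i, (∀ j, j < i → ¬(l = lc ∧ t = 2 * mSeq (s₁ + j))) →
      psi P e lc s₁ g i l t = g l t + e l t := by
  intro i
  induction i with
  | zero => intro _; rfl
  | succ i ih =>
    intro h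
    rw [psi_step_ne (h i (by omega))]
    exact ih fun j hj => h j (by omega)

lemma phi_eq_psi {g : GD d} (hs₁ : 1 ≤ s₁) {j : ℕ} {l : Fin d} {t : ℕ}
    (ht : t < 2 * mSeq (s₁ + j)) :
    phi P e lc s₁ g l t = psi P e lc s₁ g j l t := by
  rw [phi]
  rcases le_or_gt j (t + 1) with h | h
  · exact psi_stable hs₁ (t + 1) h l t ht
  · have h2 : t < 2 * mSeq (s₁ + (t + 1)) := by
      have : s₁ + (t + 1) ≤ mSeq (s₁ + (t + 1)) := mSeq_ge_self (by omega)
      omega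
    exact (psi_stable hs₁ j (by omega) l t h2).symm

lemma phi_base {g : GD d} (hs₁ : 1 ≤ s₁) {l : Fin d} {t : ℕ}
    (h : ∀ j, ¬(l = lc ∧ t = 2 * mSeq (s₁ + j))) :
    phi P e lc s₁ g l t = g l t + e l t :=
  psi_untouched (t + 1) fun j _ => h j

lemma phi_corr {g : GD d} (hs₁ : 1 ≤ s₁) (j₀ : ℕ) :
    phi P e lc s₁ g lc (2 * mSeq (s₁ + j₀)) =
      g lc (2 * mSeq (s₁ + j₀)) + e lc (2 * mSeq (s₁ + j₀)) +
        (Tg P (s₁ + j₀) (phi P e lc s₁ g) + Tg P (s₁ + j₀) g + Esum e (s₁ + j₀)) := by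
  set t := 2 * mSeq (s₁ + j₀) with htdef
  have h1 : t < 2 * mSeq (s₁ + (j₀ + 1)) := by
    have : mSeq (s₁ + j₀) < mSeq (s₁ + j₀ + 1) := mSeq_strictMonoOn (by omega) (by omega)
    have h2 : s₁ + (j₀ + 1) = s₁ + j₀ + 1 := by omega
    rw [htdef, h2]
    omega
  rw [phi_eq_psi hs₁ h1]
  show psi P e lc s₁ g j₀ lc t + _ = _
  rw [if_pos ⟨rfl, htdef⟩]
  have h3 : psi P e lc s₁ g j₀ lc t = g lc t + e lc t := by
    refine psi_untouched j₀ fun j hj => ?_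
    rintro ⟨-, h4⟩
    have : mSeq (s₁ + j) < mSeq (s₁ + j₀) := mSeq_strictMonoOn (by omega) (by omega)
    omega
  have h5 : Tg P (s₁ + j₀) (psi P e lc s₁ g j₀) = Tg P (s₁ + j₀) (phi P e lc s₁ g) := by
    refine Tg_congr fun l u hu => ?_
    exact (phi_eq_psi hs₁ (by omega)).symm
  rw [h3, h5]

lemma phi_congr {K : ℕ} {g g' : GD d} (h : ∀ l t, t < K → g l t = g' l t) :
    ∀ l t, t < K → phi P e lc s₁ g l t = phi P e lc s₁ g' l t := by
  have key : ∀ j l t, t < K → psi P e lc s₁ g j l t = psi P e lc s₁ g' j l t := by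
    intro j
    induction j with
    | zero =>
      intro l t ht
      show g l t + e l t = g' l t + e l t
      rw [h l t ht]
    | succ j ih =>
      intro l t ht
      show psi P e lc s₁ g j l t + _ = psi P e lc s₁ g' j l t + _
      rw [ih l t ht]
      congr 1
      by_cases hc : l = lc ∧ t = 2 * mSeq (s₁ + j)
      · rw [if_pos hc, if_pos hc]
        obtain ⟨-, rfl⟩ := hc
        have hT1 : Tg P (s₁ + j) (psi P e lc s₁ g j) = Tg P (s₁ + j) (psi P e lc s₁ g' j) :=
          Tg_congr fun l u hu => ih l u (by omega)
        have hT2 : Tg P (s₁ + j) g = Tg P (s₁ + j) g' :=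
          Tg_congr fun l u hu => h l u (by omega)
        rw [hT1, hT2]
      · rw [if_neg hc, if_neg hc]
  intro l t ht
  rw [phi, phi, key (t + 1) l t ht]

lemma phi_invol (hs₁ : 1 ≤ s₁) (g : GD d) :
    ∀ t l, phi P e lc s₁ (phi P e lc s₁ g) l t = g l t := by
  intro t
  induction t using Nat.strong_induction_on with
  | _ t ih =>
    intro l
    by_cases hc : ∃ j, t = 2 * mSeq (s₁ + j)
    · obtain ⟨j₀, rfl⟩ := hc
      by_cases hl : l = lc
      · subst hl
        rw [phi_corr hs₁ j₀, phi_corr hs₁ j₀]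
        have hT : Tg P (s₁ + j₀) (phi P e l s₁ (phi P e l s₁ g)) = Tg P (s₁ + j₀) g :=
          Tg_congr fun l u hu => ih u hu l
        rw [hT]
        have key : ∀ a b c f E : ZMod 2, a + b + (c + f + E) + b + (f + c + E) = a := by decide
        exact key _ _ _ _ _
      · have hni : ∀ j, ¬(l = lc ∧ 2 * mSeq (s₁ + j₀) = 2 * mSeq (s₁ + j)) := by
          rintro j ⟨h1, -⟩; exact hl h1
        rw [phi_base hs₁ hni, phi_base hs₁ hni]
        have key : ∀ a b : ZMod 2, a + b + b = a := by decide
        exact key _ _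
    · have hni : ∀ j, ¬(l = lc ∧ t = 2 * mSeq (s₁ + j)) := by
        rintro j ⟨-, h1⟩; exact hc ⟨j, h1⟩
      rw [phi_base hs₁ hni, phi_base hs₁ hni]
      have key : ∀ a b : ZMod 2, a + b + b = a := by decide
      exact key _ _

lemma phi_constraint (hs₁ : 1 ≤ s₁)
    (hA1 : ∀ s'', 1 ≤ s'' → s'' < s₁ → ∀ l t, t < 2 * mSeq s'' → e l t = 0)
    (hA2 : ∀ s'', 1 ≤ s'' → s'' < s₁ → Esum e s'' = 0)
    (g : GD d) (s' : ℕ) (hs' : 1 ≤ s') :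
    ((∑ l, phi P e lc s₁ g l (2 * mSeq s')) = Tg P s' (phi P e lc s₁ g)) ↔
      ((∑ l, g l (2 * mSeq s')) = Tg P s' g) := by
  rcases le_or_gt s₁ s' with hcase | hcase
  · -- s' ≥ s₁ : correction level
    obtain ⟨j₀, rfl⟩ : ∃ j₀, s' = s₁ + j₀ := ⟨s' - s₁, by omega⟩
    have hsum : (∑ l, phi P e lc s₁ g l (2 * mSeq (s₁ + j₀))) =
        (∑ l, g l (2 * mSeq (s₁ + j₀))) + Tg P (s₁ + j₀) (phi P e lc s₁ g) +
          Tg P (s₁ + j₀) g := by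
      have hterm : ∀ l, phi P e lc s₁ g l (2 * mSeq (s₁ + j₀)) =
          (g l (2 * mSeq (s₁ + j₀)) + e l (2 * mSeq (s₁ + j₀))) +
            (if l = lc then Tg P (s₁ + j₀) (phi P e lc s₁ g) + Tg P (s₁ + j₀) g +
              Esum e (s₁ + j₀) else 0) := by
        intro l
        by_cases hl : l = lc
        · subst hl
          rw [if_pos rfl, phi_corr hs₁ j₀]
        · rw [if_neg hl, add_zero]
          refine phi_base hs₁ fun j => ?_
          rintro ⟨h1, -⟩; exact hl h1
      rw [Finset.sum_congr rfl fun l _ => hterm l]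
      rw [Finset.sum_add_distrib, Finset.sum_add_distrib, Finset.sum_ite_eq' Finset.univ lc]
      rw [if_pos (Finset.mem_univ lc)]
      have : (∑ l, e l (2 * mSeq (s₁ + j₀))) = Esum e (s₁ + j₀) := rfl
      rw [this]
      have key : ∀ A E T1 T2 : ZMod 2, A + E + (T1 + T2 + E) = A + T1 + T2 := by decide
      exact key _ _ _ _
    rw [hsum]
    have key : ∀ A T1 T2 : ZMod 2, (A + T1 + T2 = T1) ↔ (A = T2) := by decide
    exact key _ _ _
  · -- s' < s₁ : untouched level
    have hphi_low : ∀ l t, t < 2 * mSeq s' → phi P e lc s₁ g l t = g l t := by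
      intro l t ht
      have hb : phi P e lc s₁ g l t = g l t + e l t := by
        refine phi_base hs₁ fun j => ?_
        rintro ⟨-, rfl⟩
        have : mSeq s' ≤ mSeq (s₁ + j) := mSeq_monoOn hs' (by omega)
        omega
      rw [hb, hA1 s' hs' hcase l t ht, add_zero]
    have hT : Tg P s' (phi P e lc s₁ g) = Tg P s' g := Tg_congr hphi_low
    have hsum : (∑ l, phi P e lc s₁ g l (2 * mSeq s')) = (∑ l, g l (2 * mSeq s')) := by
      have hterm : ∀ l, phi P e lc s₁ g l (2 * mSeq s') = g l (2 * mSeq s') + e l (2 * mSeq s') := by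
        intro l
        refine phi_base hs₁ fun j => ?_
        rintro ⟨-, h1⟩
        have : mSeq s' < mSeq (s₁ + j) := mSeq_strictMonoOn hs' (by omega)
        omega
      rw [Finset.sum_congr rfl fun l _ => hterm l, Finset.sum_add_distrib]
      have : (∑ l, e l (2 * mSeq s')) = Esum e s' := rfl
      rw [this, hA2 s' hs' hcase, add_zero]
    rw [hT, hsum]

lemma phi_Fpi (hs₁ : 1 ≤ s₁)
    (hA1 : ∀ s'', 1 ≤ s'' → s'' < s₁ → ∀ l t, t < 2 * mSeq s'' → e l t = 0)
    (hA2 : ∀ s'', 1 ≤ s'' → s'' < s₁ → Esum e s'' = 0)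
    (g : GD d) : g ∈ Fpi P ↔ phi P e lc s₁ g ∈ Fpi P := by
  rw [mem_Fpi_iff, mem_Fpi_iff]
  constructor
  · intro h s' hs'
    exact (phi_constraint hs₁ hA1 hA2 g s' hs').2 (h s' hs')
  · intro h s' hs'
    exact (phi_constraint hs₁ hA1 hA2 g s' hs').1 (h s' hs')

end Phi
section TauInv

variable {d : ℕ}

/-- index-level version of a bit-triangular map `φ`. -/
def PhiIdx (φ : GD d → GD d) (k : ℕ) (m : Fin d → ℕ) : Fin d → ℕ :=
  fun l => posNum k (φ (cubePoint k m) l)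

variable {φ : GD d → GD d}

lemma PhiIdx_lt (k : ℕ) (m : Fin d → ℕ) (l : Fin d) : PhiIdx φ k m l < 2 ^ k :=
  posNum_lt _ _

lemma cubePoint_PhiIdx {k : ℕ} {m : Fin d → ℕ} {l : Fin d} {t : ℕ} (ht : t < k) :
    cubePoint k (PhiIdx φ k m) l t = φ (cubePoint k m) l t :=
  intervalPoint_posNum _ ht

section WithHyps

variable (htri : ∀ K : ℕ, ∀ g g' : GD d, (∀ l t, t < K → g l t = g' l t) →
    ∀ l t, t < K → φ g l t = φ g' l t)

include htri

lemma mem_cube_phi {k : ℕ} {m : Fin d → ℕ} {g : GD d} (hg : g ∈ dyadicCube k m) :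
    φ g ∈ dyadicCube k (PhiIdx φ k m) := by
  refine mem_cube_iff_agree.2 fun l t ht => ?_
  rw [cubePoint_PhiIdx ht]
  exact htri k g (cubePoint k m) (mem_cube_iff_agree.1 hg) l t ht

variable (hinv : ∀ g : GD d, ∀ l t, φ (φ g) l t = g l t)

include hinv

lemma PhiIdx_invol {k : ℕ} {m : Fin d → ℕ} (hm : ∀ l, m l < 2 ^ k) :
    PhiIdx φ k (PhiIdx φ k m) = m := by
  funext l
  show posNum k (φ (cubePoint k (PhiIdx φ k m)) l) = m l
  have h1 : ∀ t, t < k → φ (cubePoint k (PhiIdx φ k m)) l t = cubePoint k m l t := by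
    intro t ht
    have h2 := htri k (cubePoint k (PhiIdx φ k m)) (φ (cubePoint k m))
      (fun l t ht => cubePoint_PhiIdx ht) l t ht
    rw [h2, hinv]
  rw [posNum_congr h1]
  exact posNum_intervalPoint (hm l)

variable {E : Set (GD d)} (hE : ∀ g : GD d, g ∈ E ↔ φ g ∈ E)

include hE

lemma meets_PhiIdx_iff {k : ℕ} {m : Fin d → ℕ} (hm : ∀ l, m l < 2 ^ k) :
    (dyadicCube k (PhiIdx φ k m) ∩ E).Nonempty ↔ (dyadicCube k m ∩ E).Nonempty := by
  constructor
  · rintro ⟨x, hx, hxE⟩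
    refine ⟨φ x, ?_, (hE x).1 hxE⟩
    have := mem_cube_phi htri hx
    rwa [PhiIdx_invol htri hinv hm] at this
  · rintro ⟨x, hx, hxE⟩
    exact ⟨φ x, mem_cube_phi htri hx, (hE x).1 hxE⟩

omit htri hinv hE in
lemma posNum_succ_div (k : ℕ) (h : ℕ → ZMod 2) : posNum (k + 1) h / 2 = posNum k h := by
  show (2 * posNum k h + if h k = 1 then 1 else 0) / 2 = posNum k h
  split <;> omega

omit hinv hE in
lemma PhiIdx_div {k : ℕ} {m : Fin d → ℕ} (l : Fin d) :
    PhiIdx φ (k + 1) m l / 2 = PhiIdx φ k (fun l => m l / 2) l := by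
  show posNum (k + 1) (φ (cubePoint (k + 1) m) l) / 2 = _
  rw [posNum_succ_div]
  refine posNum_congr fun t ht => ?_
  exact htri k (cubePoint (k + 1) m) (cubePoint k (fun l => m l / 2))
    (fun l t ht => cubePoint_parent ht) l t ht

/-- Invariance of the canonical quasimeasure `τ_E` under an `E`-preserving
bit-triangular involution. -/
lemma tau_phi {τ : ℕ → (Fin d → ℕ) → ℂ} (hτ : IsTauOf E τ) :
    ∀ k : ℕ, ∀ m : Fin d → ℕ, (∀ l, m l < 2 ^ k) → τ k (PhiIdx φ k m) = τ k m := by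
  obtain ⟨-, -, h3, h4⟩ := hτ
  intro k
  induction k with
  | zero =>
    intro m hm
    have : PhiIdx φ 0 m = m := by
      funext l
      show posNum 0 _ = m l
      have := hm l
      simp only [pow_zero] at this
      simp [posNum]
      omega
    rw [this]
  | succ k ih =>
    intro m hm
    set p : Fin d → ℕ := fun l => m l / 2 with hpdef
    have hp : ∀ l, p l < 2 ^ k := by
      intro l
      have := hm l
      rw [pow_succ] at this
      simp only [hpdef]
      omega
    have hPp : ∀ l, PhiIdx φ k p l < 2 ^ k := fun l => PhiIdx_lt k p l
    have hm' : ∀ l, PhiIdx φ (k + 1) m l < 2 ^ (k + 1) := fun l => PhiIdx_lt _ m l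
    by_cases hne : (dyadicCube k p ∩ E).Nonempty
    · -- parent meets E
      have hne' : (dyadicCube k (PhiIdx φ k p) ∩ E).Nonempty :=
        (meets_PhiIdx_iff htri hinv hE hp).2 hne
      set σ : Fin d → Fin 2 := fun l => ⟨m l % 2, by omega⟩ with hσdef
      have hmeq : (fun l => 2 * p l + ((σ l : ℕ))) = m := by
        funext l
        simp only [hσdef, hpdef]
        omega
      set σ' : Fin d → Fin 2 := fun l => ⟨PhiIdx φ (k + 1) m l % 2, by omega⟩ with hσ'def
      have hmeq' : (fun l => 2 * PhiIdx φ k p l + ((σ' l : ℕ))) = PhiIdx φ (k + 1) m := by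
        funext l
        simp only [hσ'def]
        rw [← PhiIdx_div htri l]
        omega
      have e1 := h4 k p hp hne σ
      have e2 := h4 k (PhiIdx φ k p) hPp hne' σ'
      rw [hmeq] at e1
      rw [hmeq'] at e2
      rw [e1, e2]
      -- transport the if-condition
      have hcond : (dyadicCube (k + 1) (PhiIdx φ (k + 1) m) ∩ E).Nonempty =
          (dyadicCube (k + 1) m ∩ E).Nonempty :=
        propext (meets_PhiIdx_iff htri hinv hE hm)
      rw [hcond, ih p hp]
      -- cardinalities agree
      have hcard :
          (Finset.univ.filter fun σ'' : Fin d → Fin 2 =>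
            (dyadicCube (k + 1) (fun l => 2 * PhiIdx φ k p l + ((σ'' l : ℕ))) ∩ E).Nonempty).card =
          (Finset.univ.filter fun σ'' : Fin d → Fin 2 =>
            (dyadicCube (k + 1) (fun l => 2 * p l + ((σ'' l : ℕ))) ∩ E).Nonempty).card := by
        have keydiv : ∀ q : Fin d → ℕ, ∀ σ'' : Fin d → Fin 2, ∀ l : Fin d,
            PhiIdx φ (k + 1) (fun l => 2 * q l + ((σ'' l : ℕ))) l / 2 = PhiIdx φ k q l := by
          intro q σ'' l
          rw [PhiIdx_div htri l]
          congr 1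
          funext l'
          have : (σ'' l' : ℕ) < 2 := (σ'' l').2
          omega
        have hbox2 : ∀ q : Fin d → ℕ, (∀ l, q l < 2 ^ k) → ∀ σ'' : Fin d → Fin 2,
            ∀ l, 2 * q l + ((σ'' l : ℕ)) < 2 ^ (k + 1) := by
          intro q hq σ'' l
          have h5 := hq l
          have : (σ'' l : ℕ) < 2 := (σ'' l).2
          rw [pow_succ]
          omega
        have hreassemble : ∀ q : Fin d → ℕ, ∀ σ'' : Fin d → Fin 2,
            (fun l => 2 * PhiIdx φ k q l +
              ((PhiIdx φ (k + 1) (fun l => 2 * q l + ((σ'' l : ℕ))) l % 2))) =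
            PhiIdx φ (k + 1) (fun l => 2 * q l + ((σ'' l : ℕ))) := by
          intro q σ''
          funext l
          rw [← keydiv q σ'' l]
          omega
        refine Finset.card_bij'
          (fun σ'' _ => fun l => (⟨PhiIdx φ (k + 1) (fun l => 2 * PhiIdx φ k p l + ((σ'' l : ℕ))) l % 2, by omega⟩ : Fin 2))
          (fun σ'' _ => fun l => (⟨PhiIdx φ (k + 1) (fun l => 2 * p l + ((σ'' l : ℕ))) l % 2, by omega⟩ : Fin 2))
          ?_ ?_ ?_ ?_
        · -- maps filter-left into filter-right
          intro σ'' hσ''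
          rw [Finset.mem_filter] at hσ'' ⊢
          refine ⟨Finset.mem_univ _, ?_⟩
          have h6 : (fun l => 2 * p l + (((fun l => (⟨PhiIdx φ (k + 1) (fun l => 2 * PhiIdx φ k p l + ((σ'' l : ℕ))) l % 2, by omega⟩ : Fin 2)) l : ℕ))) =
              PhiIdx φ (k + 1) (fun l => 2 * PhiIdx φ k p l + ((σ'' l : ℕ))) := by
            funext l
            show 2 * p l + (PhiIdx φ (k + 1) (fun l => 2 * PhiIdx φ k p l + ((σ'' l : ℕ))) l % 2) = _
            have h7 := keydiv (PhiIdx φ k p) σ'' l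
            rw [PhiIdx_invol htri hinv hp] at h7
            omega
          rw [h6]
          exact (meets_PhiIdx_iff htri hinv hE (hbox2 _ hPp σ'')).2 hσ''.2
        · -- maps filter-right into filter-left
          intro σ'' hσ''
          rw [Finset.mem_filter] at hσ'' ⊢
          refine ⟨Finset.mem_univ _, ?_⟩
          have h6 : (fun l => 2 * PhiIdx φ k p l + (((fun l => (⟨PhiIdx φ (k + 1) (fun l => 2 * p l + ((σ'' l : ℕ))) l % 2, by omega⟩ : Fin 2)) l : ℕ))) =
              PhiIdx φ (k + 1) (fun l => 2 * p l + ((σ'' l : ℕ))) := by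
            funext l
            show 2 * PhiIdx φ k p l + (PhiIdx φ (k + 1) (fun l => 2 * p l + ((σ'' l : ℕ))) l % 2) = _
            have h7 := keydiv p σ'' l
            omega
          rw [h6]
          exact (meets_PhiIdx_iff htri hinv hE (hbox2 _ hp σ'')).2 hσ''.2
        · -- left inverse
          intro σ'' hσ''
          funext l
          apply Fin.ext
          show PhiIdx φ (k + 1) (fun l' => 2 * p l' + (((fun l' => (⟨PhiIdx φ (k + 1) (fun l' => 2 * PhiIdx φ k p l' + ((σ'' l' : ℕ))) l' % 2, by omega⟩ : Fin 2)) l' : ℕ))) l % 2 = (σ'' l : ℕ)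
          have h6 : (fun l' => 2 * p l' + ((PhiIdx φ (k + 1) (fun l' => 2 * PhiIdx φ k p l' + ((σ'' l' : ℕ))) l' % 2))) =
              PhiIdx φ (k + 1) (fun l' => 2 * PhiIdx φ k p l' + ((σ'' l' : ℕ))) := by
            funext l'
            have h7 := keydiv (PhiIdx φ k p) σ'' l'
            rw [PhiIdx_invol htri hinv hp] at h7
            omega
          rw [h6, PhiIdx_invol htri hinv (hbox2 _ hPp σ'')]
          beta_reduce
          have : (σ'' l : ℕ) < 2 := (σ'' l).2
          omega
        · -- right inverse
          intro σ'' hσ''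
          funext l
          apply Fin.ext
          show PhiIdx φ (k + 1) (fun l' => 2 * PhiIdx φ k p l' + (((fun l' => (⟨PhiIdx φ (k + 1) (fun l' => 2 * p l' + ((σ'' l' : ℕ))) l' % 2, by omega⟩ : Fin 2)) l' : ℕ))) l % 2 = (σ'' l : ℕ)
          have h6 : (fun l' => 2 * PhiIdx φ k p l' + ((PhiIdx φ (k + 1) (fun l' => 2 * p l' + ((σ'' l' : ℕ))) l' % 2))) =
              PhiIdx φ (k + 1) (fun l' => 2 * p l' + ((σ'' l' : ℕ))) := by
            funext l'
            have h7 := keydiv p σ'' l'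
            omega
          rw [h6, PhiIdx_invol htri hinv (hbox2 _ hp σ'')]
          beta_reduce
          have : (σ'' l : ℕ) < 2 := (σ'' l).2
          omega
      rw [hcard]
    · -- parent misses E
      have hsub : dyadicCube (k + 1) m ⊆ dyadicCube k p := child_subset
      have hempty : dyadicCube k p ∩ E = ∅ := Set.not_nonempty_iff_eq_empty.1 hne
      have hzero : τ (k + 1) m = 0 := by
        refine (h3 (k + 1) m hm).2 ?_
        apply Set.eq_empty_of_subset_empty
        rw [← hempty]
        intro x hx
        exact ⟨hsub hx.1, hx.2⟩
      have hne2 : dyadicCube k (PhiIdx φ k p) ∩ E = ∅ := by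
        rw [← Set.not_nonempty_iff_eq_empty]
        intro hcon
        exact hne ((meets_PhiIdx_iff htri hinv hE hp).1 hcon)
      have hsub2 : dyadicCube (k + 1) (PhiIdx φ (k + 1) m) ⊆ dyadicCube k (PhiIdx φ k p) := by
        have h8 : (fun l => PhiIdx φ (k + 1) m l / 2) = PhiIdx φ k p := by
          funext l
          exact PhiIdx_div htri l
        rw [← h8]
        exact child_subset
      have hzero2 : τ (k + 1) (PhiIdx φ (k + 1) m) = 0 := by
        refine (h3 (k + 1) _ hm').2 ?_
        apply Set.eq_empty_of_subset_empty
        rw [← hne2]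
        intro x hx
        exact ⟨hsub2 hx.1, hx.2⟩
      rw [hzero, hzero2]

end WithHyps

end TauInv
section Final

lemma lt_two_pow_of_high_bits {x K : ℕ} (h : ∀ i, K ≤ i → x.testBit i = false) :
    x < 2 ^ K := by
  have hx : x = x % 2 ^ K := by
    refine Nat.eq_of_testBit_eq fun i => ?_
    rw [Nat.testBit_mod_two_pow]
    by_cases hi : i < K
    · simp [hi]
    · simp [hi, h i (by omega)]
  rw [hx]
  exact Nat.mod_lt _ (pow_pos (by norm_num) _)

lemma boxLt_mem_iff {d k : ℕ} (m : Fin d → ℕ) :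
    m ∈ boxLt (fun _ : Fin d => 2 ^ k) ↔ ∀ l, m l < 2 ^ k := by
  rw [boxLt, Fintype.mem_piFinset]
  simp [Finset.mem_range]

lemma final_sum {d : ℕ} (P : ℕ → (Fin d → ℕ) → Fin d → ℕ)
    (τ : ℕ → (Fin d → ℕ) → ℂ) (hτ : IsTauOf (Fpi P) τ)
    (s : ℕ) (hs : 1 ≤ s) (n : Fin d → ℕ)
    (e : Fin d → ℕ → ZMod 2) (lc : Fin d) (s₁ : ℕ)
    (hss₁ : s ≤ s₁)
    (hA1 : ∀ s'', 1 ≤ s'' → s'' < s₁ → ∀ l t, t < 2 * mSeq s'' → e l t = 0)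
    (hA2 : ∀ s'', 1 ≤ s'' → s'' < s₁ → Esum e s'' = 0)
    (hB1 : ∀ l t, t < mSeq s → e l t = 0)
    (hC : ∀ g : GD d, walshD n (fun l t => g l t + e l t) = - walshD n g)
    (hD : ∀ (l : Fin d) (j : ℕ), (n l).testBit (2 * mSeq (s₁ + j)) = false)
    (hEx : ∃ lf tf l', e lf tf ≠ 0 ∧ 2 ^ tf ≤ n l' ∧ ∀ j, tf ≠ 2 * mSeq (s₁ + j))
    (lv : Fin d → ℕ) (hlv : ∀ l, lv l < 2 ^ mSeq s)
    (k : ℕ) (hk : ∀ l, n l < 2 ^ k) (hμk : mSeq s ≤ k) :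
    localCoeffAt τ n (mSeq s) lv k = 0 := by
  have hs₁ : 1 ≤ s₁ := le_trans hs hss₁
  have htri : ∀ K : ℕ, ∀ g g' : GD d, (∀ l t, t < K → g l t = g' l t) →
      ∀ l t, t < K → phi P e lc s₁ g l t = phi P e lc s₁ g' l t :=
    fun K g g' h => phi_congr h
  have hinv : ∀ g : GD d, ∀ l t, phi P e lc s₁ (phi P e lc s₁ g) l t = g l t :=
    fun g l t => phi_invol hs₁ g t l
  have hEiff : ∀ g : GD d, g ∈ Fpi P ↔ phi P e lc s₁ g ∈ Fpi P :=
    phi_Fpi hs₁ hA1 hA2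
  have hphi_low : ∀ g : GD d, ∀ l t, t < mSeq s → phi P e lc s₁ g l t = g l t := by
    intro g l t ht
    have hnc : ∀ j, ¬(l = lc ∧ t = 2 * mSeq (s₁ + j)) := by
      rintro j ⟨-, rfl⟩
      have h5 : mSeq s ≤ mSeq (s₁ + j) := mSeq_monoOn hs (by omega)
      omega
    rw [phi_base hs₁ hnc, hB1 l t ht, add_zero]
  rw [localCoeffAt]
  refine Finset.sum_involution (fun m _ => PhiIdx (phi P e lc s₁) k m) ?_ ?_ ?_ ?_
  · -- pairs sum to zero
    intro m hm
    rw [Finset.mem_filter, boxLt_mem_iff] at hm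
    obtain ⟨hbox, -⟩ := hm
    have hτeq : τ k (PhiIdx (phi P e lc s₁) k m) = τ k m :=
      tau_phi htri hinv hEiff hτ k m hbox
    have hW : walshValD k n (PhiIdx (phi P e lc s₁) k m) = - walshValD k n m := by
      have hW1 : walshValD k n (PhiIdx (phi P e lc s₁) k m) =
          walshD n (phi P e lc s₁ (cubePoint k m)) := by
        rw [walshValD]
        refine walshD_congr fun l t htb => ?_
        have htk : t < k := by
          by_contra hck
          have hfalse : (n l).testBit t = false :=
            Nat.testBit_lt_two_pow (lt_of_lt_of_le (hk l)
              (Nat.pow_le_pow_right (by norm_num) (by omega)))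
          rw [hfalse] at htb
          exact Bool.noConfusion htb
        exact cubePoint_PhiIdx htk
      have hW2 : walshD n (phi P e lc s₁ (cubePoint k m)) =
          walshD n (fun l t => cubePoint k m l t + e l t) := by
        refine walshD_congr fun l t htb => ?_
        by_cases hcor : ∃ j, l = lc ∧ t = 2 * mSeq (s₁ + j)
        · obtain ⟨j, -, rfl⟩ := hcor
          rw [hD l j] at htb
          exact Bool.noConfusion htb
        · exact phi_base hs₁ fun j hj => hcor ⟨j, hj⟩
      rw [hW1, hW2, hC (cubePoint k m)]
      rfl
    rw [hW, hτeq]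
    push_cast
    ring
  · -- the involution is fixed-point free
    intro m hm hfne
    obtain ⟨lf, tf, l', helf, hge, hcor⟩ := hEx
    have htfk : tf < k :=
      (Nat.pow_lt_pow_iff_right (by norm_num : 1 < 2)).1 (lt_of_le_of_lt hge (hk l'))
    intro heq
    replace heq : PhiIdx (phi P e lc s₁) k m = m := heq
    have h1 : cubePoint k (PhiIdx (phi P e lc s₁) k m) lf tf =
        phi P e lc s₁ (cubePoint k m) lf tf := cubePoint_PhiIdx htfk
    rw [heq] at h1
    have h2 : phi P e lc s₁ (cubePoint k m) lf tf = cubePoint k m lf tf + e lf tf :=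
      phi_base hs₁ fun j hj => hcor j hj.2
    rw [h2] at h1
    exact helf (left_eq_add.1 h1)
  · -- maps the index set to itself
    intro m hm
    rw [Finset.mem_filter, boxLt_mem_iff] at hm
    obtain ⟨hbox, hsub⟩ := hm
    rw [Finset.mem_filter, boxLt_mem_iff]
    refine ⟨fun l => PhiIdx_lt k m l, ?_⟩
    rw [cube_subset_iff hμk]
    intro l t ht
    have h1 : cubePoint k (PhiIdx (phi P e lc s₁) k m) l t =
        phi P e lc s₁ (cubePoint k m) l t := cubePoint_PhiIdx (lt_of_lt_of_le ht hμk)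
    rw [h1, hphi_low _ l t ht]
    exact (cube_subset_iff hμk).1 hsub l t ht
  · -- involution property
    intro m hm
    rw [Finset.mem_filter, boxLt_mem_iff] at hm
    exact PhiIdx_invol htri hinv hm.1

end Final
section Statement12Proof

lemma statement12_aux (d : ℕ) (hd : 2 ≤ d) (π : PermSeq d)
    (τ : ℕ → (Fin d → ℕ) → ℂ) (hτ : IsTauOf (Fpi π.f) τ) (s : ℕ) (hs : 1 ≤ s)
    (n : Fin d → ℕ) (h1 : ∀ l, n l < 2 ^ (2 * mSeq s + 1))
    (h2 : ¬(∀ l, 2 ^ (2 * mSeq s) ≤ n l ∧ n l < 2 ^ (2 * mSeq s + 1)))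
    (h3 : ¬(∀ l, n l < 2 ^ mSeq s)) :
    ∀ lv : Fin d → ℕ, (∀ l, lv l < 2 ^ mSeq s) →
      ∀ k : ℕ, (∀ l, n l < 2 ^ k) → mSeq s ≤ k →
        localCoeffAt τ n (mSeq s) lv k = 0 := by
  intro lv hlv k hk hμk
  by_cases hbc : ∃ l₀ l₁ : Fin d,
      (n l₀).testBit (2 * mSeq s) = true ∧ (n l₁).testBit (2 * mSeq s) = false
  · -- Case 1 : the top bits are not constant
    obtain ⟨l₀, l₁, hb0, hb1⟩ := hbc
    have hnel : l₀ ≠ l₁ := fun h => by rw [h, hb1] at hb0; exact Bool.noConfusion hb0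
    set e1 : Fin d → ℕ → ZMod 2 :=
      fun l t => if (l = l₀ ∨ l = l₁) ∧ t = 2 * mSeq s then 1 else 0 with he1
    refine final_sum π.f τ hτ s hs n e1 l₀ (s + 1) (by omega)
      ?_ ?_ ?_ ?_ ?_ ?_ lv hlv k hk hμk
    · -- hA1
      intro s'' hs'' hlt l t ht
      have hle : mSeq s'' ≤ mSeq s := mSeq_monoOn hs'' (by omega)
      rw [he1]
      exact if_neg (by rintro ⟨-, rfl⟩; omega)
    · -- hA2
      intro s'' hs'' hlt
      show (∑ l, e1 l (2 * mSeq s'')) = 0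
      by_cases hss : s'' = s
      · subst hss
        have hterm : ∀ l : Fin d, e1 l (2 * mSeq s'') =
            (if l = l₀ then (1 : ZMod 2) else 0) + (if l = l₁ then (1 : ZMod 2) else 0) := by
          intro l
          by_cases hl0 : l = l₀ <;> by_cases hl1 : l = l₁
          · exact absurd (hl0.symm.trans hl1) hnel
          · simp [he1, hl0, hl1, hnel, Ne.symm hnel]
          · simp [he1, hl0, hl1, hnel, Ne.symm hnel]
          · simp [he1, hl0, hl1, hnel, Ne.symm hnel]
        rw [Finset.sum_congr rfl fun l _ => hterm l, Finset.sum_add_distrib,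
          Finset.sum_ite_eq' Finset.univ l₀ (fun _ => (1 : ZMod 2)),
          Finset.sum_ite_eq' Finset.univ l₁ (fun _ => (1 : ZMod 2)),
          if_pos (Finset.mem_univ l₀), if_pos (Finset.mem_univ l₁)]
        decide
      · have hlt2 : mSeq s'' < mSeq s := mSeq_strictMonoOn hs'' (by omega)
        refine Finset.sum_eq_zero fun l _ => ?_
        rw [he1]
        exact if_neg (by rintro ⟨-, h⟩; omega)
    · -- hB1
      intro l t ht
      rw [he1]
      exact if_neg (by rintro ⟨-, rfl⟩; omega)
    · -- hC
      intro g
      have hfac : ∀ l : Fin d, walsh (n l) (fun t => g l t + e1 l t) =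
          (if l = l₀ then (-1 : ℝ) else 1) * walsh (n l) (g l) := by
        intro l
        by_cases hl0 : l = l₀
        · have hfun : (fun t => g l t + e1 l t) =
              (fun t => if t = 2 * mSeq s then g l t + 1 else g l t) := by
            funext t
            by_cases ht : t = 2 * mSeq s
            · simp [he1, ht, hl0]
            · simp [he1, ht]
          rw [hfun, walsh_flip, hl0, hb0]
          simp
        · by_cases hl1 : l = l₁
          · have hfun : (fun t => g l t + e1 l t) =
                (fun t => if t = 2 * mSeq s then g l t + 1 else g l t) := by
              funext t
              by_cases ht : t = 2 * mSeq s
              · simp [he1, ht, hl1]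
              · simp [he1, ht]
            rw [hfun, walsh_flip, hl1, hb1]
            simp [Ne.symm hnel]
          · have hfun : (fun t => g l t + e1 l t) = g l := by
              funext t
              simp [he1, hl0, hl1]
            rw [hfun, if_neg hl0, one_mul]
      have h7 : walshD n (fun l t => g l t + e1 l t) =
          ∏ l, ((if l = l₀ then (-1 : ℝ) else 1) * walsh (n l) (g l)) :=
        Finset.prod_congr rfl fun l _ => hfac l
      rw [h7, Finset.prod_mul_distrib,
        Finset.prod_ite_eq' Finset.univ l₀ (fun _ => (-1 : ℝ)),
        if_pos (Finset.mem_univ l₀)]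
      rw [walshD]
      ring
    · -- hD
      intro l j
      refine Nat.testBit_lt_two_pow (lt_of_lt_of_le (h1 l)
        (Nat.pow_le_pow_right (by norm_num) ?_))
      have h8 : mSeq (s + 1) ≤ mSeq (s + 1 + j) := mSeq_monoOn (by omega) (by omega)
      have h9 : mSeq (s + 1) = 2 * (2 * mSeq s + 1) := mSeq_succ_eq hs
      omega
    · -- hEx
      refine ⟨l₀, 2 * mSeq s, l₀, ?_, Nat.ge_two_pow_of_testBit hb0, ?_⟩
      · show (if ((l₀ = l₀ ∨ l₀ = l₁) ∧ 2 * mSeq s = 2 * mSeq s) then (1 : ZMod 2) else 0) ≠ 0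
        rw [if_pos ⟨Or.inl rfl, rfl⟩]
        decide
      · intro j
        have : mSeq s < mSeq (s + 1 + j) := mSeq_strictMonoOn hs (by omega)
        omega
  · -- Case 2 : the top bits are constant
    by_cases hall : ∀ l, (n l).testBit (2 * mSeq s) = true
    · exact absurd (fun l => ⟨Nat.ge_two_pow_of_testBit (hall l), h1 l⟩) h2
    · have hb0 : ∀ l, (n l).testBit (2 * mSeq s) = false := by
        push_neg at hall
        obtain ⟨lB, hlB⟩ := hall
        have hlB' : (n lB).testBit (2 * mSeq s) = false := by
          cases hv : (n lB).testBit (2 * mSeq s)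
          · rfl
          · exact absurd hv hlB
        intro l
        cases hv : (n l).testBit (2 * mSeq s)
        · rfl
        · exact absurd ⟨l, lB, hv, hlB'⟩ hbc
      have hsmall : ∀ l, n l < 2 ^ (2 * mSeq s) := by
        intro l
        by_contra hc
        push_neg at hc
        have hdiv : n l / 2 ^ (2 * mSeq s) = 1 := by
          refine Nat.div_eq_of_lt_le (by omega) ?_
          have := h1 l
          rw [pow_succ] at this
          omega
        have h9 := hb0 l
        rw [Nat.testBit_eq_decide_div_mod_eq, hdiv] at h9
        simp at h9
      push_neg at h3
      obtain ⟨l₀, hl₀⟩ := h3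
      have hn0 : n l₀ ≠ 0 := by
        have h2p : 0 < 2 ^ mSeq s := pow_pos (by norm_num) _
        omega
      obtain ⟨t₀, ht₀b, ht₀max⟩ := Nat.exists_most_significant_bit hn0
      have ht₀ge : mSeq s ≤ t₀ := by
        by_contra hcge
        push_neg at hcge
        have : n l₀ < 2 ^ mSeq s :=
          lt_two_pow_of_high_bits fun i hi => ht₀max i (by omega)
        omega
      have ht₀lt : t₀ < 2 * mSeq s := by
        have hge := Nat.ge_two_pow_of_testBit ht₀b
        have := hsmall l₀
        by_contra hcge
        push_neg at hcge
        have h10 : (2 : ℕ) ^ (2 * mSeq s) ≤ 2 ^ t₀ := Nat.pow_le_pow_right (by norm_num) hcge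
        omega
      set e2 : Fin d → ℕ → ZMod 2 := fun l t => if l = l₀ ∧ t = t₀ then 1 else 0 with he2
      refine final_sum π.f τ hτ s hs n e2 l₀ s (le_refl s)
        ?_ ?_ ?_ ?_ ?_ ?_ lv hlv k hk hμk
      · -- hA1
        intro s'' hs'' hlt l t ht
        have hle : 2 * mSeq s'' + 1 ≤ mSeq s := two_mSeq_lt_of_lt hs'' hlt
        rw [he2]
        exact if_neg (by rintro ⟨-, rfl⟩; omega)
      · -- hA2
        intro s'' hs'' hlt
        have hle : 2 * mSeq s'' + 1 ≤ mSeq s := two_mSeq_lt_of_lt hs'' hlt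
        refine Finset.sum_eq_zero fun l _ => ?_
        rw [he2]
        exact if_neg (by rintro ⟨-, h⟩; omega)
      · -- hB1
        intro l t ht
        rw [he2]
        exact if_neg (by rintro ⟨-, rfl⟩; omega)
      · -- hC
        intro g
        have hfac : ∀ l : Fin d, walsh (n l) (fun t => g l t + e2 l t) =
            (if l = l₀ then (-1 : ℝ) else 1) * walsh (n l) (g l) := by
          intro l
          by_cases hl0 : l = l₀
          · have hfun : (fun t => g l t + e2 l t) =
                (fun t => if t = t₀ then g l t + 1 else g l t) := by
              funext t
              by_cases ht : t = t₀
              · simp [he2, ht, hl0]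
              · simp [he2, ht]
            rw [hfun, walsh_flip, hl0, ht₀b]
            simp
          · have hfun : (fun t => g l t + e2 l t) = g l := by
              funext t
              simp [he2, hl0]
            rw [hfun, if_neg hl0, one_mul]
        have h7 : walshD n (fun l t => g l t + e2 l t) =
            ∏ l, ((if l = l₀ then (-1 : ℝ) else 1) * walsh (n l) (g l)) :=
          Finset.prod_congr rfl fun l _ => hfac l
        rw [h7, Finset.prod_mul_distrib,
          Finset.prod_ite_eq' Finset.univ l₀ (fun _ => (-1 : ℝ)),
          if_pos (Finset.mem_univ l₀)]
        rw [walshD]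
        ring
      · -- hD
        intro l j
        refine Nat.testBit_lt_two_pow (lt_of_lt_of_le (hsmall l)
          (Nat.pow_le_pow_right (by norm_num) ?_))
        have h8 : mSeq s ≤ mSeq (s + j) := mSeq_monoOn hs (by omega)
        omega
      · -- hEx
        refine ⟨l₀, t₀, l₀, ?_, Nat.ge_two_pow_of_testBit ht₀b, ?_⟩
        · show (if (l₀ = l₀ ∧ t₀ = t₀) then (1 : ZMod 2) else 0) ≠ 0
          rw [if_pos ⟨rfl, rfl⟩]
          decide
        · intro j
          have h8 : mSeq s ≤ mSeq (s + j) := mSeq_monoOn hs (by omega)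
          omega

end Statement12Proof
/-- if `𝐧 < 2^{2m_s+1}𝟏`, `𝐧 ∉ B_{2m_s}` and `𝐧 ∉ {0,…,2^{m_s}−1}^d`,
then all local coefficients `(τ^π)̂_𝐧(Δ^{(m_s)}_𝐥)` vanish. -/
theorem statement12 (d : ℕ) (hd : 2 ≤ d) (π : PermSeq d)
    (τ : ℕ → (Fin d → ℕ) → ℂ) (hτ : IsTauOf (Fpi π.f) τ) (s : ℕ) (hs : 1 ≤ s)
    (n : Fin d → ℕ) (h1 : ∀ l, n l < 2 ^ (2 * mSeq s + 1))
    (h2 : ¬(∀ l, 2 ^ (2 * mSeq s) ≤ n l ∧ n l < 2 ^ (2 * mSeq s + 1)))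
    (h3 : ¬(∀ l, n l < 2 ^ mSeq s)) :
    ∀ lv : Fin d → ℕ, (∀ l, lv l < 2 ^ mSeq s) →
      ∀ k : ℕ, (∀ l, n l < 2 ^ k) → mSeq s ≤ k →
        localCoeffAt τ n (mSeq s) lv k = 0 := by
  exact statement12_aux d hd π τ hτ s hs n h1 h2 h3
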